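/- For every f : [0,1] → ℝ with V_{Λ,p}(f) < ∞ and every strictly increasing sequence (n_k) of positive integers, the double series Σ_{j=1}^∞ p_{(n_k)}(j) Σ_{i=1}^{2} (−1)^i f(J_{2(j−1)+i})·|h(J_{2(j−1)+i})|/λ_{2(j−1)+i} converges absolutely, and its absolute value is at most V_{Λ,p}(f)·V_{Λ,q}(h). In particular the functional L_{(n_k)} is well-defined on ΛBV^{(p)}. -/

import Mathlib

open Filter Set
open scoped ENNReal Classical

noncomputable section

/-- `Λ = （λ_i)_{i≥1}` is a Waterman sequence: positive, nondecreasing, `λ_1 = 1`,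
and `∑ 1/λ_i = ∞`. -/
def WatermanSeq (lam : ℕ → ℝ) : Prop :=
  (∀ i, 0 < lam i) ∧ Monotone lam ∧ lam 1 = 1 ∧
    Tendsto (fun n => ∑ i ∈ Finset.Icc 1 n, 1 / lam i) atTop atTop

/-- `Λ(M) = ∑_{i=1}^{M} 1/λ_i`. -/
def LamSum (lam : ℕ → ℝ) (M : ℕ) : ℝ := ∑ i ∈ Finset.Icc 1 M, 1 / lam i

/-- `{[a i, b i]}_{i < m}` is a finite family of pairwise non-overlapping closed
subintervals of `[0,1]`. -/
def NonOverlapping (m : ℕ) (a b : ℕ → ℝ) : Prop :=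
  (∀ i < m, 0 ≤ a i ∧ a i ≤ b i ∧ b i ≤ 1) ∧
    ∀ i < m, ∀ j < m, i ≠ j → b i ≤ a j ∨ b j ≤ a i

/-- `(∑_{i=1}^m |f(I_i)|^s / λ_i)^{1/s}` for the family `I_i = [a i, b i]`. -/
def vSum (lam : ℕ → ℝ) (s : ℝ) (f : ℝ → ℝ) (m : ℕ) (a b : ℕ → ℝ) : ℝ :=
  (∑ i ∈ Finset.range m, |f (b i) - f (a i)| ^ s / lam (i + 1)) ^ (1 / s)

/-- The `s`-`Λ`-variation `V_{Λ,s}(f)`, an element of `[0,∞]`. -/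
def variation (lam : ℕ → ℝ) (s : ℝ) (f : ℝ → ℝ) : ℝ≥0∞ :=
  ⨆ (m : ℕ) (a : ℕ → ℝ) (b : ℕ → ℝ) (_ : NonOverlapping m a b),
    ENNReal.ofReal (vSum lam s f m a b)

/-- `M_n = 2^(3n-1)`. -/
def Mseq (n : ℕ) : ℕ := 2 ^ (3 * n - 1)

/-- `b_{n,j} = 2^{-n} + (2j-2)/2^{4n}`. -/
def bb (n j : ℕ) : ℝ := ((2 : ℝ) ^ n)⁻¹ + (2 * (j : ℝ) - 2) / 2 ^ (4 * n)

/-- `c_{n,j} = 2^{-n} + (2j-1)/2^{4n}`. -/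
def cc (n j : ℕ) : ℝ := ((2 : ℝ) ^ n)⁻¹ + (2 * (j : ℝ) - 1) / 2 ^ (4 * n)

/-- The function `h_n`. -/
def hfun (lam : ℕ → ℝ) (q : ℝ) (n : ℕ) (y : ℝ) : ℝ :=
  if ∃ j, 1 ≤ j ∧ j ≤ (Mseq n - 2) / 2 ∧ y ∈ Set.Ico (bb n j) (cc n j) then
    ((2 : ℝ) ^ n)⁻¹ * LamSum lam (Mseq n) ^ (-(1 / q))
  else 0

/-- `h = ∑_{n=2}^∞ h_n`. -/
def hh (lam : ℕ → ℝ) (q : ℝ) (y : ℝ) : ℝ := ∑' n : ℕ, hfun lam q (n + 2) y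

/-- The sequence `r`: `r_{2k} = c_{k+2,(M_{k+2}-2)/2}`, `r_{2k+1} = b_{k+2,(M_{k+2}-2)/2}`. -/
def rr (i : ℕ) : ℝ :=
  if i % 2 = 0 then cc (i / 2 + 2) ((Mseq (i / 2 + 2) - 2) / 2)
  else bb (i / 2 + 2) ((Mseq (i / 2 + 2) - 2) / 2)

/-- `f(J_i) = f(r_{i-1}) - f(r_i)` where `J_i = [r_i, r_{i-1}]` (for `i ≥ 1`). -/
def incrJ (f : ℝ → ℝ) (i : ℕ) : ℝ := f (rr (i - 1)) - f (rr i)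

/-- `p_{(n_k)}(j) = (-1)^{k+1}` if `j = n_k` for some `k ≥ 1`, and `0` otherwise. -/
def psgn (nseq : ℕ → ℕ) (j : ℕ) : ℝ :=
  if h : ∃ k, 1 ≤ k ∧ nseq k = j then (-1 : ℝ) ^ (h.choose + 1) else 0

/-- The `j`-th (here `j = m+1`, `m : ℕ`) term of the series defining `L_{(n_k)}`:
`p_{(n_k)}(j) ∑_{i=1}^2 (-1)^i f(J_{2(j-1)+i}) |h(J_{2(j-1)+i})| / λ_{2(j-1)+i}`. -/
def Lterm (lam : ℕ → ℝ) (q : ℝ) (nseq : ℕ → ℕ) (f : ℝ → ℝ) (m : ℕ) : ℝ :=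
  psgn nseq (m + 1) * ∑ i ∈ Finset.Icc 1 2,
    (-1 : ℝ) ^ i * incrJ f (2 * m + i) * |incrJ (hh lam q) (2 * m + i)| / lam (2 * m + i)

/-- The functional `L_{(n_k)}(f) = f(J') + ∑_{j=1}^∞ (…)`, with `J' = [3/8, 3/8 + 2⁻⁸]`. -/
def Lfun (lam : ℕ → ℝ) (q : ℝ) (nseq : ℕ → ℕ) (f : ℝ → ℝ) : ℝ :=
  (f (3 / 8 + 1 / 2 ^ 8) - f (3 / 8)) + ∑' m : ℕ, Lterm lam q nseq f m

/-- The tent function `f_l`. -/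
def tent (nseq : ℕ → ℕ) (l : ℕ) (x : ℝ) : ℝ :=
  if 3 / 8 < x ∧ x ≤ 3 / 8 + 1 / 2 ^ 8 then psgn nseq l
  else if rr (2 * l) ≤ x ∧ x ≤ rr (2 * l - 1) then
    (x - rr (2 * l)) / (rr (2 * l - 1) - rr (2 * l))
  else if rr (2 * l - 1) ≤ x ∧ x ≤ rr (2 * l - 2) then
    (rr (2 * l - 2) - x) / (rr (2 * l - 2) - rr (2 * l - 1))
  else 0

/-! ### Auxiliary lemmas -/

lemma aux_Mseq (k : ℕ) : Mseq (k + 2) = 2 ^ (3 * k + 5) := by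
  have h : 3 * (k + 2) - 1 = 3 * k + 5 := by omega
  rw [Mseq, h]

lemma aux_j (k : ℕ) : (Mseq (k + 2) - 2) / 2 = 2 ^ (3 * k + 4) - 1 := by
  rw [aux_Mseq]
  have h : (2:ℕ) ^ (3 * k + 5) = 2 ^ (3 * k + 4) * 2 := by
    rw [show 3 * k + 5 = 3 * k + 4 + 1 from rfl, pow_succ]
  have h2 : (1:ℕ) ≤ 2 ^ (3 * k + 4) := Nat.one_le_two_pow
  omega

lemma aux_rr_even (k : ℕ) :
    rr (2 * k) = ((2:ℝ) ^ (k + 2))⁻¹ + ((2:ℝ) ^ (3 * k + 5) - 3) / 2 ^ (4 * k + 8) := by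
  have h2 : (2 * k) % 2 = 0 := by omega
  have h3 : (2 * k) / 2 = k := by omega
  rw [rr, if_pos h2, h3, aux_j, cc]
  have h1 : (1:ℕ) ≤ 2 ^ (3 * k + 4) := Nat.one_le_two_pow
  have hc : ((2 ^ (3 * k + 4) - 1 : ℕ) : ℝ) = 2 ^ (3 * k + 4) - 1 := by
    push_cast [h1]; try ring
  rw [hc, show 4 * (k + 2) = 4 * k + 8 from by ring]
  have h4 : (2:ℝ) ^ (3 * k + 5) = 2 ^ (3 * k + 4) * 2 := by
    rw [show 3 * k + 5 = 3 * k + 4 + 1 from rfl, pow_succ]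
  rw [h4]; ring

lemma aux_rr_odd (k : ℕ) :
    rr (2 * k + 1) = ((2:ℝ) ^ (k + 2))⁻¹ + ((2:ℝ) ^ (3 * k + 5) - 4) / 2 ^ (4 * k + 8) := by
  have h2 : (2 * k + 1) % 2 ≠ 0 := by omega
  have h3 : (2 * k + 1) / 2 = k := by omega
  rw [rr, if_neg h2, h3, aux_j, bb]
  have h1 : (1:ℕ) ≤ 2 ^ (3 * k + 4) := Nat.one_le_two_pow
  have hc : ((2 ^ (3 * k + 4) - 1 : ℕ) : ℝ) = 2 ^ (3 * k + 4) - 1 := by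
    push_cast [h1]; try ring
  rw [hc, show 4 * (k + 2) = 4 * k + 8 from by ring]
  have h4 : (2:ℝ) ^ (3 * k + 5) = 2 ^ (3 * k + 4) * 2 := by
    rw [show 3 * k + 5 = 3 * k + 4 + 1 from rfl, pow_succ]
  rw [h4]; ring

lemma aux_four_le (k : ℕ) : (4:ℝ) ≤ 2 ^ (3 * k + 5) := by
  calc (4:ℝ) = 2 ^ 2 := by norm_num
  _ ≤ 2 ^ (3 * k + 5) := by
      apply pow_le_pow_right₀ (by norm_num) (by omega)

lemma aux_rr_lb (i : ℕ) : ((2:ℝ) ^ (i / 2 + 2))⁻¹ ≤ rr i := by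
  rcases Nat.even_or_odd i with ⟨k, hk⟩ | ⟨k, hk⟩
  · have hi : i = 2 * k := by omega
    subst hi
    rw [aux_rr_even, show 2 * k / 2 = k from by omega]
    have : (0:ℝ) ≤ ((2:ℝ) ^ (3 * k + 5) - 3) / 2 ^ (4 * k + 8) := by
      apply div_nonneg _ (by positivity)
      linarith [aux_four_le k]
    linarith
  · have hi : i = 2 * k + 1 := by omega
    subst hi
    rw [aux_rr_odd, show (2 * k + 1) / 2 = k from by omega]
    have : (0:ℝ) ≤ ((2:ℝ) ^ (3 * k + 5) - 4) / 2 ^ (4 * k + 8) := by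
      apply div_nonneg _ (by positivity)
      linarith [aux_four_le k]
    linarith

lemma aux_key_div (k : ℕ) : ((2:ℝ) ^ (3 * k + 5)) / 2 ^ (4 * k + 8) = ((2:ℝ) ^ (k + 3))⁻¹ := by
  have h : (2:ℝ) ^ (4 * k + 8) = 2 ^ (3 * k + 5) * 2 ^ (k + 3) := by
    rw [← pow_add]; congr 1; ring
  rw [h, mul_comm, ← div_div, div_self (by positivity), one_div]

lemma aux_rr_ub (i : ℕ) : rr i ≤ ((2:ℝ) ^ (i / 2 + 2))⁻¹ + ((2:ℝ) ^ (i / 2 + 3))⁻¹ := by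
  rcases Nat.even_or_odd i with ⟨k, hk⟩ | ⟨k, hk⟩
  · have hi : i = 2 * k := by omega
    subst hi
    rw [aux_rr_even, show 2 * k / 2 = k from by omega]
    have h1 : ((2:ℝ) ^ (3 * k + 5) - 3) / 2 ^ (4 * k + 8)
        ≤ ((2:ℝ) ^ (3 * k + 5)) / 2 ^ (4 * k + 8) := by
      gcongr
      linarith
    rw [aux_key_div] at h1
    linarith
  · have hi : i = 2 * k + 1 := by omega
    subst hi
    rw [aux_rr_odd, show (2 * k + 1) / 2 = k from by omega]
    have h1 : ((2:ℝ) ^ (3 * k + 5) - 4) / 2 ^ (4 * k + 8)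
        ≤ ((2:ℝ) ^ (3 * k + 5)) / 2 ^ (4 * k + 8) := by
      gcongr
      linarith
    rw [aux_key_div] at h1
    linarith

lemma aux_rr_pos (i : ℕ) : 0 < rr i :=
  lt_of_lt_of_le (by positivity) (aux_rr_lb i)

lemma aux_two_inv_le {a b : ℕ} (hab : a ≤ b) : ((2:ℝ) ^ b)⁻¹ ≤ ((2:ℝ) ^ a)⁻¹ := by
  apply inv_anti₀ (by positivity)
  exact pow_le_pow_right₀ (by norm_num) hab

lemma aux_rr_lt (i : ℕ) : rr i < ((2:ℝ) ^ (i / 2 + 1))⁻¹ := by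
  refine lt_of_le_of_lt (aux_rr_ub i) ?_
  set k := i / 2
  have e2 : ((2:ℝ) ^ (k + 2))⁻¹ = ((2:ℝ) ^ (k + 1))⁻¹ / 2 := by
    rw [pow_succ]; rw [mul_inv]; ring
  have e3 : ((2:ℝ) ^ (k + 3))⁻¹ = ((2:ℝ) ^ (k + 1))⁻¹ / 4 := by
    rw [show k + 3 = (k + 1) + 2 from by ring, pow_add, mul_inv]; norm_num; ring
  have hpos : (0:ℝ) < ((2:ℝ) ^ (k + 1))⁻¹ := by positivity
  rw [e2, e3]
  linarith

lemma aux_rr_succ_le (i : ℕ) : rr (i + 1) ≤ rr i := by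
  rcases Nat.even_or_odd i with ⟨k, hk⟩ | ⟨k, hk⟩
  · have hi : i = 2 * k := by omega
    subst hi
    rw [aux_rr_even, aux_rr_odd]
    have hD : (0:ℝ) < 2 ^ (4 * k + 8) := by positivity
    gcongr
    · linarith
  · have hi : i = 2 * k + 1 := by omega
    subst hi
    have h1 : rr (2 * k + 1 + 1) ≤ ((2:ℝ) ^ (k + 3))⁻¹ + ((2:ℝ) ^ (k + 4))⁻¹ := by
      have := aux_rr_ub (2 * k + 2)
      rw [show (2 * k + 2) / 2 = k + 1 from by omega] at this
      convert this using 3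
    have h2 : ((2:ℝ) ^ (k + 2))⁻¹ ≤ rr (2 * k + 1) := by
      have := aux_rr_lb (2 * k + 1)
      rwa [show (2 * k + 1) / 2 = k from by omega] at this
    refine h1.trans (le_trans ?_ h2)
    have e3 : ((2:ℝ) ^ (k + 3))⁻¹ = ((2:ℝ) ^ (k + 2))⁻¹ / 2 := by
      rw [pow_succ, mul_inv]; ring
    have e4 : ((2:ℝ) ^ (k + 4))⁻¹ = ((2:ℝ) ^ (k + 2))⁻¹ / 4 := by
      rw [show k + 4 = (k + 2) + 2 from by ring, pow_add, mul_inv]; norm_num; ring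
    have hpos : (0:ℝ) < ((2:ℝ) ^ (k + 2))⁻¹ := by positivity
    rw [e3, e4]
    linarith

lemma aux_rr_anti : Antitone rr :=
  antitone_nat_of_succ_le aux_rr_succ_le

lemma aux_rr_le_one (i : ℕ) : rr i ≤ 1 := by
  refine (aux_rr_ub i).trans ?_
  have h1 := aux_two_inv_le (show 2 ≤ i / 2 + 2 from by omega)
  have h2 := aux_two_inv_le (show 3 ≤ i / 2 + 3 from by omega)
  norm_num at h1 h2
  linarith

lemma aux_LamSum_nonneg {lam : ℕ → ℝ} (hlam : WatermanSeq lam) (M : ℕ) :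
    0 ≤ LamSum lam M :=
  Finset.sum_nonneg fun i _ => div_nonneg zero_le_one (hlam.1 i).le

lemma aux_LamSum_ge_one {lam : ℕ → ℝ} (hlam : WatermanSeq lam) {M : ℕ} (hM : 1 ≤ M) :
    1 ≤ LamSum lam M := by
  have h0 : ∀ i ∈ Finset.Icc 1 M, 0 ≤ 1 / lam i :=
    fun i _ => div_nonneg zero_le_one (hlam.1 i).le
  have hmem : 1 ∈ Finset.Icc 1 M := Finset.mem_Icc.mpr ⟨le_refl 1, hM⟩
  have h := Finset.single_le_sum h0 hmem
  rw [hlam.2.2.1] at h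
  simpa [LamSum] using h

lemma aux_Mseq_ge_one (n : ℕ) : 1 ≤ Mseq n := by
  rw [Mseq]; exact Nat.one_le_two_pow

lemma aux_hfun_nonneg {lam : ℕ → ℝ} (hlam : WatermanSeq lam) (q : ℝ) (n : ℕ) (y : ℝ) :
    0 ≤ hfun lam q n y := by
  rw [hfun]
  split
  · exact mul_nonneg (by positivity) (Real.rpow_nonneg (aux_LamSum_nonneg hlam _) _)
  · exact le_rfl
    
lemma aux_hfun_le {lam : ℕ → ℝ} (hlam : WatermanSeq lam) {q : ℝ} (hq : 1 < q) (n : ℕ) (y : ℝ) :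
    hfun lam q n y ≤ ((2:ℝ) ^ n)⁻¹ := by
  rw [hfun]
  split
  · have h1 : 1 ≤ LamSum lam (Mseq n) := aux_LamSum_ge_one hlam (aux_Mseq_ge_one n)
    have h2 : LamSum lam (Mseq n) ^ (-(1/q)) ≤ 1 :=
      Real.rpow_le_one_of_one_le_of_nonpos h1 (neg_nonpos.mpr (by positivity))
    calc ((2:ℝ) ^ n)⁻¹ * LamSum lam (Mseq n) ^ (-(1/q)) ≤ ((2:ℝ) ^ n)⁻¹ * 1 := by
          apply mul_le_mul_of_nonneg_left h2 (by positivity)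
      _ = ((2:ℝ) ^ n)⁻¹ := mul_one _
  · positivity

lemma aux_hfun_zero {lam : ℕ → ℝ} {q : ℝ} {n : ℕ} {y : ℝ} (hy : y < ((2:ℝ) ^ n)⁻¹) :
    hfun lam q n y = 0 := by
  rw [hfun, if_neg]
  rintro ⟨j, hj1, hj2, hmem⟩
  have hb : ((2:ℝ) ^ n)⁻¹ ≤ bb n j := by
    rw [bb]
    have hj : (1:ℝ) ≤ (j:ℝ) := by exact_mod_cast hj1
    have : (0:ℝ) ≤ (2 * (j:ℝ) - 2) / 2 ^ (4 * n) := by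
      apply div_nonneg _ (by positivity)
      linarith
    linarith
  exact absurd (hb.trans hmem.1) (not_le.mpr hy)

lemma aux_geom_summable : Summable (fun n : ℕ => ((2:ℝ) ^ n)⁻¹) := by
  simpa [one_div, inv_pow] using summable_geometric_two

lemma aux_hfun_summable {lam : ℕ → ℝ} (hlam : WatermanSeq lam) {q : ℝ} (hq : 1 < q) (y : ℝ) :
    Summable (fun n : ℕ => hfun lam q (n + 2) y) :=
  Summable.of_nonneg_of_le (fun n => aux_hfun_nonneg hlam q _ y)
    (fun n => aux_hfun_le hlam hq _ y) ((summable_nat_add_iff 2).mpr aux_geom_summable)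

lemma aux_hh_nonneg {lam : ℕ → ℝ} (hlam : WatermanSeq lam) (q : ℝ) (y : ℝ) :
    0 ≤ hh lam q y :=
  tsum_nonneg fun n => aux_hfun_nonneg hlam q _ y

lemma aux_hh_le {lam : ℕ → ℝ} (hlam : WatermanSeq lam) {q : ℝ} (hq : 1 < q) (k : ℕ) {y : ℝ}
    (hy : y < ((2:ℝ) ^ (k + 1))⁻¹) : hh lam q y ≤ ((2:ℝ) ^ (k + 1))⁻¹ := by
  classical
  set g : ℕ → ℝ := fun n => if k ≤ n then ((2:ℝ) ^ (n + 2))⁻¹ else 0 with hg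
  have hg0 : ∀ n, 0 ≤ g n := by
    intro n
    simp only [hg]
    split
    · positivity
    · exact le_rfl
  have hg_le : ∀ n, g n ≤ ((2:ℝ) ^ (n + 2))⁻¹ := by
    intro n
    simp only [hg]
    split
    · exact le_rfl
    · positivity
  have hgs : Summable g :=
    Summable.of_nonneg_of_le hg0 hg_le ((summable_nat_add_iff 2).mpr aux_geom_summable)
  have hle : ∀ n, hfun lam q (n + 2) y ≤ g n := by
    intro n
    by_cases h : k ≤ n
    · simpa [hg, h] using aux_hfun_le hlam hq (n + 2) y
    · have h2 : y < ((2:ℝ) ^ (n + 2))⁻¹ := lt_of_lt_of_le hy (aux_two_inv_le (by omega))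
      simp [hg, h, aux_hfun_zero h2]
  rw [hh]
  refine le_trans (Summable.tsum_le_tsum hle (aux_hfun_summable hlam hq y) hgs) (le_of_eq ?_)
  rw [← Summable.sum_add_tsum_nat_add k hgs]
  have hz : ∑ i ∈ Finset.range k, g i = 0 :=
    Finset.sum_eq_zero fun i hi => by
      simp [hg, Nat.not_le.mpr (Finset.mem_range.mp hi)]
  have he : ∀ n : ℕ, g (n + k) = ((2:ℝ) ^ (k + 2))⁻¹ * (1 / 2) ^ n := by
    intro n
    have hx : (2:ℝ) ^ (n + k + 2) = 2 ^ (k + 2) * 2 ^ n := by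
      rw [← pow_add]; congr 1; omega
    simp only [hg, if_pos (show k ≤ n + k from by omega)]
    rw [hx, mul_inv, one_div, inv_pow]
  rw [hz, zero_add, tsum_congr he, tsum_mul_left, tsum_geometric_two]
  rw [show k + 2 = (k + 1) + 1 from rfl, pow_succ, mul_inv, mul_assoc,
    inv_mul_cancel₀ (by norm_num : (2:ℝ) ≠ 0), mul_one]

lemma aux_hh_at_rr {lam : ℕ → ℝ} (hlam : WatermanSeq lam) {q : ℝ} (hq : 1 < q) (i : ℕ) :
    hh lam q (rr i) ≤ ((2:ℝ) ^ (i / 2 + 1))⁻¹ :=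
  aux_hh_le hlam hq (i / 2) (aux_rr_lt i)

lemma aux_incrJ_hh {lam : ℕ → ℝ} (hlam : WatermanSeq lam) {q : ℝ} (hq : 1 < q) (n : ℕ) :
    |incrJ (hh lam q) n| ≤ ((2:ℝ) ^ ((n - 1) / 2))⁻¹ := by
  rw [incrJ, abs_sub_le_iff]
  constructor
  · have h1 := aux_hh_at_rr hlam hq (n - 1)
    have h2 := aux_hh_nonneg hlam q (rr n)
    have h3 := aux_two_inv_le (show (n - 1) / 2 ≤ (n - 1) / 2 + 1 from by omega)
    linarith
  · have h1 := aux_hh_at_rr hlam hq n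
    have h2 := aux_hh_nonneg hlam q (rr (n - 1))
    have h3 := aux_two_inv_le (show (n - 1) / 2 ≤ n / 2 + 1 from by omega)
    linarith

lemma aux_vSum_le_variation (lam : ℕ → ℝ) (s : ℝ) (f : ℝ → ℝ) (m : ℕ) (a b : ℕ → ℝ)
    (h : NonOverlapping m a b) :
    ENNReal.ofReal (vSum lam s f m a b) ≤ variation lam s f := by
  rw [variation]
  exact le_iSup_of_le m (le_iSup_of_le a (le_iSup_of_le b (le_iSup_of_le h le_rfl)))

lemma aux_f_bound {lam : ℕ → ℝ} (hlam : WatermanSeq lam) {p : ℝ} (hp : 1 < p) {f : ℝ → ℝ}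
    (hf : variation lam p f < ⊤) {x y : ℝ} (h0 : 0 ≤ y) (hyx : y ≤ x) (hx1 : x ≤ 1) :
    |f x - f y| ≤ (variation lam p f).toReal := by
  have hno : NonOverlapping 1 (fun _ => y) (fun _ => x) :=
    ⟨fun i _ => ⟨h0, hyx, hx1⟩, fun i hi j hj hij => absurd (by omega : i = j) hij⟩
  have hp0 : p ≠ 0 := ne_of_gt (lt_trans zero_lt_one hp)
  have hv : vSum lam p f 1 (fun _ => y) (fun _ => x) = |f x - f y| := by
    simp only [vSum, Finset.sum_range_one]
    rw [hlam.2.2.1, div_one, ← Real.rpow_mul (abs_nonneg _), mul_one_div, div_self hp0,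
      Real.rpow_one]
  have hle := aux_vSum_le_variation lam p f 1 _ _ hno
  rw [hv] at hle
  exact (ENNReal.ofReal_le_iff_le_toReal hf.ne).mp hle

/-- for every `f` with `V_{Λ,p}(f) < ∞` and every strictly increasing sequence
`(n_k)` of positive integers, the series defining `L_{(n_k)}(f)` converges absolutely and
its absolute value is at most `V_{Λ,p}(f)·V_{Λ,q}(h)`; in particular `L_{(n_k)}` is
well-defined on `ΛBV^{(p)}`. -/
theorem stmt8 (lam : ℕ → ℝ) (hlam : WatermanSeq lam) (p q : ℝ)
    (hp : 1 < p) (hq : 1 < q) (hpq : 1 / p + 1 / q = 1)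
    (nseq : ℕ → ℕ) (hmono : StrictMono nseq) (hone : 1 ≤ nseq 1)
    (f : ℝ → ℝ) (hf : variation lam p f < ⊤) :
    (Summable fun m : ℕ => |Lterm lam q nseq f m|) ∧
    ENNReal.ofReal |∑' m : ℕ, Lterm lam q nseq f m|
      ≤ variation lam p f * variation lam q (hh lam q) := by
  classical
  have hlam1 : ∀ n : ℕ, 1 ≤ n → 1 ≤ lam n := by
    intro n hn
    have h := hlam.2.1 hn
    rwa [hlam.2.2.1] at h
  set C := (variation lam p f).toReal with hC
  have hC0 : 0 ≤ C := ENNReal.toReal_nonneg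
  set B : ℕ → ℝ := fun n => |incrJ f n| * |incrJ (hh lam q) n| / lam n with hB
  have hB0 : ∀ n, 0 ≤ B n := fun n =>
    div_nonneg (mul_nonneg (abs_nonneg _) (abs_nonneg _)) (hlam.1 n).le
  have hfb : ∀ n : ℕ, |incrJ f n| ≤ C := by
    intro n
    rw [incrJ]
    exact aux_f_bound hlam hp hf (aux_rr_pos n).le (aux_rr_anti (Nat.sub_le n 1))
      (aux_rr_le_one _)
  have hBle : ∀ m i : ℕ, 1 ≤ i → B (2 * m + i) ≤ C * ((2:ℝ) ^ m)⁻¹ := by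
    intro m i hi
    have h1 : |incrJ (hh lam q) (2 * m + i)| ≤ ((2:ℝ) ^ m)⁻¹ :=
      (aux_incrJ_hh hlam hq (2 * m + i)).trans (aux_two_inv_le (by omega))
    have h2 : (1:ℝ) ≤ lam (2 * m + i) := hlam1 _ (by omega)
    calc B (2 * m + i) ≤ |incrJ f (2 * m + i)| * |incrJ (hh lam q) (2 * m + i)| :=
          div_le_self (mul_nonneg (abs_nonneg _) (abs_nonneg _)) h2
      _ ≤ C * ((2:ℝ) ^ m)⁻¹ := mul_le_mul (hfb _) h1 (abs_nonneg _) hC0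
  have hgeoC : Summable (fun m : ℕ => C * ((2:ℝ) ^ m)⁻¹) := aux_geom_summable.mul_left C
  have hs1 : Summable (fun m : ℕ => B (2 * m + 1)) :=
    Summable.of_nonneg_of_le (fun m => hB0 _) (fun m => hBle m 1 le_rfl) hgeoC
  have hs2 : Summable (fun m : ℕ => B (2 * m + 2)) :=
    Summable.of_nonneg_of_le (fun m => hB0 _) (fun m => hBle m 2 (by omega)) hgeoC
  have habs : ∀ m : ℕ, |Lterm lam q nseq f m| ≤ B (2 * m + 1) + B (2 * m + 2) := by
    intro m
    have hps : |psgn nseq (m + 1)| ≤ 1 := by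
      rw [psgn]
      split
      · rw [abs_pow, abs_neg, abs_one, one_pow]
      · simp
    have e : ∀ i : ℕ,
        |(-1:ℝ) ^ i * incrJ f (2 * m + i) * |incrJ (hh lam q) (2 * m + i)| / lam (2 * m + i)|
          = B (2 * m + i) := by
      intro i
      simp only [hB]
      rw [abs_div, abs_mul, abs_mul, abs_pow, abs_neg, abs_one, one_pow, one_mul, abs_abs,
        abs_of_pos (hlam.1 _)]
    have hicc : (Finset.Icc 1 2 : Finset ℕ) = {1, 2} := by decide
    rw [Lterm, abs_mul, hicc, Finset.sum_insert (by decide), Finset.sum_singleton]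
    calc |psgn nseq (m + 1)| *
        |(-1:ℝ) ^ 1 * incrJ f (2 * m + 1) * |incrJ (hh lam q) (2 * m + 1)| / lam (2 * m + 1) +
         (-1:ℝ) ^ 2 * incrJ f (2 * m + 2) * |incrJ (hh lam q) (2 * m + 2)| / lam (2 * m + 2)|
        ≤ 1 * (|(-1:ℝ) ^ 1 * incrJ f (2 * m + 1) * |incrJ (hh lam q) (2 * m + 1)| / lam (2 * m + 1)| +
            |(-1:ℝ) ^ 2 * incrJ f (2 * m + 2) * |incrJ (hh lam q) (2 * m + 2)| / lam (2 * m + 2)|) :=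
          mul_le_mul hps (abs_add_le _ _) (abs_nonneg _) zero_le_one
      _ = B (2 * m + 1) + B (2 * m + 2) := by rw [one_mul, e 1, e 2]
  have hsL : Summable fun m : ℕ => |Lterm lam q nseq f m| :=
    Summable.of_nonneg_of_le (fun m => abs_nonneg _) habs (hs1.add hs2)
  refine ⟨hsL, ?_⟩
  have hsB' : Summable (fun n : ℕ => B (n + 1)) :=
    (HasSum.even_add_odd (f := fun n => B (n + 1)) hs1.hasSum hs2.hasSum).summable
  have hteq : ∑' m : ℕ, (B (2 * m + 1) + B (2 * m + 2)) = ∑' n : ℕ, B (n + 1) := by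
    rw [Summable.tsum_add hs1 hs2]
    exact tsum_even_add_odd (f := fun n => B (n + 1)) hs1 hs2
  set a : ℕ → ℝ := fun n => rr (n + 1) with ha
  set b : ℕ → ℝ := fun n => rr n with hb2
  have hno : ∀ N, NonOverlapping N a b := by
    intro N
    constructor
    · intro i _
      exact ⟨(aux_rr_pos _).le, aux_rr_anti (by omega), aux_rr_le_one _⟩
    · intro i _ j _ hij
      rcases lt_or_gt_of_ne hij with h | h
      · exact Or.inr (aux_rr_anti (by omega : i + 1 ≤ j))
      · exact Or.inl (aux_rr_anti (by omega : j + 1 ≤ i))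
  have hqc : Real.HolderConjugate p q := ⟨by simpa [one_div] using hpq, by linarith, by linarith⟩
  have hp0 : p ≠ 0 := ne_of_gt (lt_trans zero_lt_one hp)
  have hq0 : q ≠ 0 := ne_of_gt (lt_trans zero_lt_one hq)
  have hw : ∀ n : ℕ, (0:ℝ) < (lam (n + 1))⁻¹ := fun n => inv_pos.mpr (hlam.1 _)
  have hNbound : ∀ N : ℕ, ∑ n ∈ Finset.range N, B (n + 1)
      ≤ vSum lam p f N a b * vSum lam q (hh lam q) N a b := by
    intro N
    set F : ℕ → ℝ := fun n => |incrJ f (n + 1)| * (lam (n + 1))⁻¹ ^ (1/p) with hF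
    set G : ℕ → ℝ := fun n => |incrJ (hh lam q) (n + 1)| * (lam (n + 1))⁻¹ ^ (1/q) with hG
    have hFG : ∀ n, B (n + 1) = F n * G n := by
      intro n
      have hwn := hw n
      have hsum : ((lam (n + 1):ℝ))⁻¹ ^ (1/p) * ((lam (n + 1):ℝ))⁻¹ ^ (1/q)
          = ((lam (n + 1):ℝ))⁻¹ := by
        rw [← Real.rpow_add hwn, hpq, Real.rpow_one]
      symm
      have hstep : F n * G n = |incrJ f (n + 1)| * |incrJ (hh lam q) (n + 1)| *
          (((lam (n + 1):ℝ))⁻¹ ^ (1/p) * ((lam (n + 1):ℝ))⁻¹ ^ (1/q)) := by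
        simp only [hF, hG]; ring
      rw [hstep, hsum]
      simp only [hB]
      rw [div_eq_mul_inv]
    have hFp : ∀ n, |F n| ^ p = |incrJ f (n + 1)| ^ p / lam (n + 1) := by
      intro n
      have h2 : (0:ℝ) ≤ (lam (n + 1))⁻¹ := (hw n).le
      simp only [hF]
      rw [abs_of_nonneg (mul_nonneg (abs_nonneg _) (Real.rpow_nonneg h2 _)),
        Real.mul_rpow (abs_nonneg _) (Real.rpow_nonneg h2 _),
        ← Real.rpow_mul h2, one_div, inv_mul_cancel₀ hp0, Real.rpow_one, ← div_eq_mul_inv]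
    have hGq : ∀ n, |G n| ^ q = |incrJ (hh lam q) (n + 1)| ^ q / lam (n + 1) := by
      intro n
      have h2 : (0:ℝ) ≤ (lam (n + 1))⁻¹ := (hw n).le
      simp only [hG]
      rw [abs_of_nonneg (mul_nonneg (abs_nonneg _) (Real.rpow_nonneg h2 _)),
        Real.mul_rpow (abs_nonneg _) (Real.rpow_nonneg h2 _),
        ← Real.rpow_mul h2, one_div, inv_mul_cancel₀ hq0, Real.rpow_one, ← div_eq_mul_inv]
    have hvp : (∑ n ∈ Finset.range N, |F n| ^ p) ^ (1/p) = vSum lam p f N a b := by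
      rw [vSum]
      congr 1
      apply Finset.sum_congr rfl
      intro n _
      have hx : f (b n) - f (a n) = incrJ f (n + 1) := by simp [incrJ, ha, hb2]
      rw [hFp n, hx]
    have hvq : (∑ n ∈ Finset.range N, |G n| ^ q) ^ (1/q) = vSum lam q (hh lam q) N a b := by
      rw [vSum]
      congr 1
      apply Finset.sum_congr rfl
      intro n _
      have hx : hh lam q (b n) - hh lam q (a n) = incrJ (hh lam q) (n + 1) := by
        simp [incrJ, ha, hb2]
      rw [hGq n, hx]
    calc ∑ n ∈ Finset.range N, B (n + 1) = ∑ n ∈ Finset.range N, F n * G n :=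
          Finset.sum_congr rfl fun n _ => hFG n
      _ ≤ (∑ n ∈ Finset.range N, |F n| ^ p) ^ (1/p) * (∑ n ∈ Finset.range N, |G n| ^ q) ^ (1/q) :=
          Real.inner_le_Lp_mul_Lq (Finset.range N) F G hqc
      _ = vSum lam p f N a b * vSum lam q (hh lam q) N a b := by rw [hvp, hvq]
  have hVbound : ∀ N : ℕ, ENNReal.ofReal (∑ n ∈ Finset.range N, B (n + 1))
      ≤ variation lam p f * variation lam q (hh lam q) := by
    intro N
    have hv0 : 0 ≤ vSum lam p f N a b := by
      apply Real.rpow_nonneg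
      apply Finset.sum_nonneg
      intro i _
      exact div_nonneg (Real.rpow_nonneg (abs_nonneg _) _) (hlam.1 _).le
    calc ENNReal.ofReal (∑ n ∈ Finset.range N, B (n + 1))
        ≤ ENNReal.ofReal (vSum lam p f N a b * vSum lam q (hh lam q) N a b) :=
          ENNReal.ofReal_le_ofReal (hNbound N)
      _ = ENNReal.ofReal (vSum lam p f N a b) * ENNReal.ofReal (vSum lam q (hh lam q) N a b) :=
          ENNReal.ofReal_mul hv0
      _ ≤ variation lam p f * variation lam q (hh lam q) :=
          mul_le_mul' (aux_vSum_le_variation _ _ _ _ _ _ (hno N))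
            (aux_vSum_le_variation _ _ _ _ _ _ (hno N))
  have htend : Tendsto (fun N => ∑ n ∈ Finset.range N, B (n + 1)) atTop
      (nhds (∑' n : ℕ, B (n + 1))) := hsB'.hasSum.tendsto_sum_nat
  have hT : ENNReal.ofReal (∑' n : ℕ, B (n + 1))
      ≤ variation lam p f * variation lam q (hh lam q) :=
    le_of_tendsto (ENNReal.tendsto_ofReal htend) (Filter.Eventually.of_forall hVbound)
  have h1 : |∑' m : ℕ, Lterm lam q nseq f m| ≤ ∑' m : ℕ, |Lterm lam q nseq f m| := by
    simpa [Real.norm_eq_abs] using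
      norm_tsum_le_tsum_norm (f := Lterm lam q nseq f) (by simpa [Real.norm_eq_abs] using hsL)
  have h2 : ∑' m : ℕ, |Lterm lam q nseq f m| ≤ ∑' m : ℕ, (B (2 * m + 1) + B (2 * m + 2)) :=
    Summable.tsum_le_tsum habs hsL (hs1.add hs2)
  have h3 : |∑' m : ℕ, Lterm lam q nseq f m| ≤ ∑' n : ℕ, B (n + 1) := by
    rw [← hteq]; exact h1.trans h2
  exact (ENNReal.ofReal_le_ofReal h3).trans hT
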